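/- Rothstein–Trager criterion: Let C be an algebraically closed field of characteristic zero, and let a, b ∈ C[x] with b squarefree and deg(b) ≥ 1. For every z₀ ∈ C, the resultant res_x(a − z₀·b′, b) is zero if and only if there exists β ∈ C with b(β) = 0 and a(β) − z₀·b′(β) = 0, where b′ denotes the formal derivative of b. In other words, the roots of the Rothstein–Trager resultant r(z) = res_x(a − z·b′, b) are exactly the residues a(β)/b′(β) of a/b at the roots β of b. -/

import Mathlib

open Polynomial

/-- The Sylvester matrix of two polynomials `f` and `g` (with respect to their actual
degrees `m = deg f` and `n = deg g`): a square matrix of size `n + m` whose first block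
of `n` rows holds the shifted coefficient sequences of `f` and whose second block of
`m` rows holds the shifted coefficient sequences of `g`. -/
noncomputable def sylvesterMatrix {K : Type} [CommRing K] (f g : Polynomial K) :
    Matrix (Fin g.natDegree ⊕ Fin f.natDegree) (Fin g.natDegree ⊕ Fin f.natDegree) K :=
  Matrix.of fun i j =>
    let j' : ℕ := (finSumFinEquiv j : Fin (g.natDegree + f.natDegree))
    match i with
    | Sum.inl i =>
        if (i : ℕ) ≤ j' ∧ j' ≤ (i : ℕ) + f.natDegree then
          f.coeff (f.natDegree + (i : ℕ) - j')
        else 0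
    | Sum.inr i =>
        if (i : ℕ) ≤ j' ∧ j' ≤ (i : ℕ) + g.natDegree then
          g.coeff (g.natDegree + (i : ℕ) - j')
        else 0

/-- The resultant `res_x(f, g)`: the determinant of the Sylvester matrix of `f` and
`g`. -/
noncomputable def resultant {K : Type} [CommRing K] (f g : Polynomial K) : K :=
  (sylvesterMatrix f g).det

section Aux

variable {C : Type} [Field C]

/-- The polynomial with coefficient `w i` on `X ^ (n - 1 - i)`. -/
noncomputable def rowPoly (n : ℕ) (w : Fin n → C) : Polynomial C :=
  ∑ i : Fin n, Polynomial.C (w i) * X ^ (n - 1 - (i : ℕ))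

lemma coeff_rowPoly (n : ℕ) (w : Fin n → C) (k : ℕ) :
    (rowPoly n w).coeff k = if h : k < n then w ⟨n - 1 - k, by omega⟩ else 0 := by
  rw [rowPoly, finset_sum_coeff]
  split_ifs with h
  · rw [Finset.sum_eq_single (⟨n - 1 - k, by omega⟩ : Fin n)]
    · simp only [coeff_C_mul, coeff_X_pow]
      rw [if_pos (by omega), mul_one]
    · intro i _ hi
      simp only [coeff_C_mul, coeff_X_pow]
      rw [if_neg, mul_zero]
      intro hEq
      apply hi
      have hi' : (i : ℕ) < n := i.isLt
      have : (i : ℕ) = n - 1 - k := by omega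
      exact Fin.ext this
    · intro hmem
      exact absurd (Finset.mem_univ _) hmem
  · apply Finset.sum_eq_zero
    intro i _
    have hi' : (i : ℕ) < n := i.isLt
    simp only [coeff_C_mul, coeff_X_pow]
    rw [if_neg (by omega), mul_zero]

lemma degree_rowPoly (n : ℕ) (w : Fin n → C) :
    (rowPoly n w).degree < (n : WithBot ℕ) := by
  rw [degree_lt_iff_coeff_zero]
  intro k hk
  rw [coeff_rowPoly, dif_neg]
  exact_mod_cast fun h => absurd hk (by exact_mod_cast not_le.mpr (by exact_mod_cast h))

lemma rowPoly_eq (n : ℕ) (p : Polynomial C) (hp : p.degree < (n : WithBot ℕ)) :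
    rowPoly n (fun i => p.coeff (n - 1 - (i : ℕ))) = p := by
  ext k
  rw [coeff_rowPoly]
  split_ifs with h
  · show p.coeff (n - 1 - (n - 1 - k)) = p.coeff k
    congr 1
    omega
  · symm
    apply coeff_eq_zero_of_degree_lt
    exact lt_of_lt_of_le hp (by exact_mod_cast not_lt.mp h)

lemma ifCoeff (f : Polynomial C) (n i j' : ℕ) (hi : i < n) (hj : j' < n + f.natDegree) :
    (if n - 1 - i ≤ n + f.natDegree - 1 - j' then
        f.coeff (n + f.natDegree - 1 - j' - (n - 1 - i)) else 0)
      = if i ≤ j' ∧ j' ≤ i + f.natDegree then f.coeff (f.natDegree + i - j') else 0 := by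
  split_ifs with h1 h2 h2
  · congr 1
    omega
  · apply coeff_eq_zero_of_natDegree_lt
    omega
  · exfalso; omega
  · rfl

lemma vecMul_sylvester (f g : Polynomial C) (v : Fin g.natDegree ⊕ Fin f.natDegree → C)
    (j : Fin g.natDegree ⊕ Fin f.natDegree) :
    Matrix.vecMul v (sylvesterMatrix f g) j
      = (rowPoly g.natDegree (v ∘ Sum.inl) * f + rowPoly f.natDegree (v ∘ Sum.inr) * g).coeff
          (g.natDegree + f.natDegree - 1 - (finSumFinEquiv j : ℕ)) := by
  have hj : ((finSumFinEquiv j : Fin (g.natDegree + f.natDegree)) : ℕ)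
      < g.natDegree + f.natDegree := (finSumFinEquiv j).isLt
  have hmul : ∀ (N : ℕ) (w : Fin N → C) (h : Polynomial C) (t : ℕ),
      (rowPoly N w * h).coeff t
        = ∑ i : Fin N, w i *
            (if N - 1 - (i : ℕ) ≤ t then h.coeff (t - (N - 1 - (i : ℕ))) else 0) := by
    intro N w h t
    rw [rowPoly, Finset.sum_mul, finset_sum_coeff]
    refine Finset.sum_congr rfl fun i _ => ?_
    have : Polynomial.C (w i) * X ^ (N - 1 - (i : ℕ)) * h
        = Polynomial.C (w i) * (h * X ^ (N - 1 - (i : ℕ))) := by ring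
    rw [this, coeff_C_mul, coeff_mul_X_pow']
  rw [coeff_add, hmul, hmul]
  rw [Matrix.vecMul, dotProduct, Fintype.sum_sum_type]
  congr 1
  · refine Finset.sum_congr rfl fun i _ => ?_
    have hM : sylvesterMatrix f g (Sum.inl i) j
        = if (i : ℕ) ≤ ((finSumFinEquiv j : Fin (g.natDegree + f.natDegree)) : ℕ) ∧
            ((finSumFinEquiv j : Fin (g.natDegree + f.natDegree)) : ℕ) ≤ (i : ℕ) + f.natDegree
          then f.coeff (f.natDegree + (i : ℕ)
            - ((finSumFinEquiv j : Fin (g.natDegree + f.natDegree)) : ℕ)) else 0 := rfl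
    rw [hM, ← ifCoeff f g.natDegree (i : ℕ) _ i.isLt hj]
    rfl
  · refine Finset.sum_congr rfl fun i _ => ?_
    have hM : sylvesterMatrix f g (Sum.inr i) j
        = if (i : ℕ) ≤ ((finSumFinEquiv j : Fin (g.natDegree + f.natDegree)) : ℕ) ∧
            ((finSumFinEquiv j : Fin (g.natDegree + f.natDegree)) : ℕ) ≤ (i : ℕ) + g.natDegree
          then g.coeff (g.natDegree + (i : ℕ)
            - ((finSumFinEquiv j : Fin (g.natDegree + f.natDegree)) : ℕ)) else 0 := rfl
    have ht : g.natDegree + f.natDegree - 1 - ((finSumFinEquiv j : Fin (g.natDegree + f.natDegree)) : ℕ)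
        = f.natDegree + g.natDegree - 1 - ((finSumFinEquiv j : Fin (g.natDegree + f.natDegree)) : ℕ) := by
      omega
    rw [hM, ht, ← ifCoeff g f.natDegree (i : ℕ) _ i.isLt (by omega)]
    rfl

lemma degree_mul_lt_of {p : Polynomial C} (h : Polynomial C) {N : ℕ}
    (hp : p.degree < (N : WithBot ℕ)) :
    (p * h).degree < ((N + h.natDegree : ℕ) : WithBot ℕ) := by
  rcases eq_or_ne p 0 with rfl | hp0
  · rw [zero_mul, degree_zero]
    exact WithBot.bot_lt_coe _
  rcases eq_or_ne h 0 with rfl | hh0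
  · rw [mul_zero, degree_zero]
    exact WithBot.bot_lt_coe _
  rw [degree_mul, degree_eq_natDegree hp0, degree_eq_natDegree hh0]
  have h1 : p.natDegree < N := by
    have := degree_eq_natDegree hp0 ▸ hp
    exact_mod_cast this
  exact_mod_cast (by omega : p.natDegree + h.natDegree < N + h.natDegree)

/-- Key equivalence: the resultant vanishes iff there is a nontrivial relation
`p f + q g = 0` with `deg p < deg g` and `deg q < deg f`. -/
lemma resultant_eq_zero_iff (f g : Polynomial C) :
    _root_.resultant f g = 0 ↔
      ∃ p q : Polynomial C, (p ≠ 0 ∨ q ≠ 0) ∧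
        p.degree < (g.natDegree : WithBot ℕ) ∧ q.degree < (f.natDegree : WithBot ℕ) ∧
        p * f + q * g = 0 := by
  classical
  set n := g.natDegree with hn
  set m := f.natDegree with hm
  rw [_root_.resultant, ← Matrix.exists_vecMul_eq_zero_iff]
  constructor
  · rintro ⟨v, hv, hv0⟩
    set p := rowPoly n (v ∘ Sum.inl) with hp
    set q := rowPoly m (v ∘ Sum.inr) with hq
    have hsum : p * f + q * g = 0 := by
      have hdlt : (p * f + q * g).degree < ((n + m : ℕ) : WithBot ℕ) := by
        refine lt_of_le_of_lt (degree_add_le _ _) (max_lt ?_ ?_)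
        · exact degree_mul_lt_of f (degree_rowPoly n _)
        · have h2 : (q * g).degree < ((m + n : ℕ) : WithBot ℕ) :=
            degree_mul_lt_of g (degree_rowPoly m _)
          have h3 : ((m + n : ℕ) : WithBot ℕ) = ((n + m : ℕ) : WithBot ℕ) := by
            rw [Nat.add_comm]
          rwa [h3] at h2
      ext k
      rw [coeff_zero]
      by_cases hk : k < n + m
      · set j := finSumFinEquiv.symm (⟨n + m - 1 - k, by omega⟩ : Fin (n + m)) with hj
        have hjval : (finSumFinEquiv j : ℕ) = n + m - 1 - k := by
          rw [hj, Equiv.apply_symm_apply]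
        have := vecMul_sylvester f g v j
        rw [show Matrix.vecMul v (sylvesterMatrix f g) j = 0 by rw [hv0]; rfl] at this
        rw [hjval] at this
        have hkk : n + m - 1 - (n + m - 1 - k) = k := by omega
        rw [hkk] at this
        exact this.symm
      · exact coeff_eq_zero_of_degree_lt
          (lt_of_lt_of_le hdlt (by exact_mod_cast not_lt.mp hk))
    refine ⟨p, q, ?_, degree_rowPoly n _, degree_rowPoly m _, hsum⟩
    by_contra hc
    push_neg at hc
    obtain ⟨hp0, hq0⟩ := hc
    apply hv
    funext i
    cases i with
    | inl i =>
        have := coeff_rowPoly n (v ∘ Sum.inl) (n - 1 - (i : ℕ))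
        rw [← hp, hp0, coeff_zero] at this
        rw [dif_pos (by omega : n - 1 - (i : ℕ) < n)] at this
        have hi : (⟨n - 1 - (n - 1 - (i : ℕ)), by omega⟩ : Fin n) = i := by
          have := i.isLt; ext; simp only; omega
        rw [hi] at this
        exact this.symm
    | inr i =>
        have := coeff_rowPoly m (v ∘ Sum.inr) (m - 1 - (i : ℕ))
        rw [← hq, hq0, coeff_zero] at this
        rw [dif_pos (by omega : m - 1 - (i : ℕ) < m)] at this
        have hi : (⟨m - 1 - (m - 1 - (i : ℕ)), by omega⟩ : Fin m) = i := by
          have := i.isLt; ext; simp only; omega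
        rw [hi] at this
        exact this.symm
  · rintro ⟨p, q, hpq, hpdeg, hqdeg, heq⟩
    refine ⟨Sum.elim (fun i : Fin n => p.coeff (n - 1 - (i : ℕ)))
      (fun i : Fin m => q.coeff (m - 1 - (i : ℕ))), ?_, ?_⟩
    · -- v ≠ 0
      intro hv0
      have hcoeffp : ∀ i : Fin n, p.coeff (n - 1 - (i : ℕ)) = 0 := fun i =>
        congrFun hv0 (Sum.inl i)
      have hcoeffq : ∀ i : Fin m, q.coeff (m - 1 - (i : ℕ)) = 0 := fun i =>
        congrFun hv0 (Sum.inr i)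
      have hp0 : p = 0 := by
        ext k
        rw [coeff_zero]
        by_cases hk : k < n
        · have := hcoeffp ⟨n - 1 - k, by omega⟩
          simpa [show n - 1 - (n - 1 - k) = k by omega] using this
        · exact coeff_eq_zero_of_degree_lt
            (lt_of_lt_of_le hpdeg (by exact_mod_cast not_lt.mp hk))
      have hq0 : q = 0 := by
        ext k
        rw [coeff_zero]
        by_cases hk : k < m
        · have := hcoeffq ⟨m - 1 - k, by omega⟩
          simpa [show m - 1 - (m - 1 - k) = k by omega] using this
        · exact coeff_eq_zero_of_degree_lt
            (lt_of_lt_of_le hqdeg (by exact_mod_cast not_lt.mp hk))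
      rcases hpq with h | h
      · exact h hp0
      · exact h hq0
    · -- vecMul = 0
      funext j
      rw [vecMul_sylvester]
      have h1 : rowPoly n ((Sum.elim (fun i : Fin n => p.coeff (n - 1 - (i : ℕ)))
          (fun i : Fin m => q.coeff (m - 1 - (i : ℕ)))) ∘ Sum.inl) = p := by
        have : ((Sum.elim (fun i : Fin n => p.coeff (n - 1 - (i : ℕ)))
            (fun i : Fin m => q.coeff (m - 1 - (i : ℕ)))) ∘ Sum.inl)
            = fun i : Fin n => p.coeff (n - 1 - (i : ℕ)) := rfl
        rw [this, rowPoly_eq n p hpdeg]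
      have h2 : rowPoly m ((Sum.elim (fun i : Fin n => p.coeff (n - 1 - (i : ℕ)))
          (fun i : Fin m => q.coeff (m - 1 - (i : ℕ)))) ∘ Sum.inr) = q := by
        have : ((Sum.elim (fun i : Fin n => p.coeff (n - 1 - (i : ℕ)))
            (fun i : Fin m => q.coeff (m - 1 - (i : ℕ)))) ∘ Sum.inr)
            = fun i : Fin m => q.coeff (m - 1 - (i : ℕ)) := rfl
        rw [this, rowPoly_eq m q hqdeg]
      rw [h1, h2, heq, coeff_zero]
      rfl

end Aux

/-- **Rothstein–Trager criterion.**
Let `C` be an algebraically closed field of characteristic zero and `a, b ∈ C[x]` with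
`b` squarefree of degree `≥ 1`. For every `z₀ ∈ C`, the resultant
`res_x(a − z₀·b′, b)` vanishes if and only if there is `β ∈ C` with `b(β) = 0` and
`a(β) − z₀·b′(β) = 0`: the roots of the Rothstein–Trager resultant
`r(z) = res_x(a − z·b′, b)` are exactly the residues `a(β)/b′(β)` of `a/b` at the
roots `β` of `b`. -/
theorem rothstein_trager_criterion
    {C : Type} [Field C] [CharZero C] [IsAlgClosed C]
    (a b : Polynomial C) (hb : Squarefree b) (hdeg : 0 < b.degree) (z₀ : C) :
    _root_.resultant (a - Polynomial.C z₀ * derivative b) b = 0 ↔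
      ∃ β : C, b.eval β = 0 ∧
        a.eval β - z₀ * (derivative b).eval β = 0 := by
  classical
  set f := a - Polynomial.C z₀ * derivative b with hf
  have hb0 : b ≠ 0 := fun h => by simp [h] at hdeg
  have hbn : 0 < b.natDegree := natDegree_pos_iff_degree_pos.mpr hdeg
  have hevalf : ∀ β : C, f.eval β = a.eval β - z₀ * (derivative b).eval β := by
    intro β; simp [hf]
  rw [_root_.resultant_eq_zero_iff]
  constructor
  · rintro ⟨p, q, hpq, hpdeg, hqdeg, heq⟩
    by_contra hno
    push_neg at hno
    have hno' : ∀ β : C, b.eval β = 0 → f.eval β ≠ 0 := by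
      intro β hβ
      rw [hevalf]
      exact hno β hβ
    -- f ≠ 0
    obtain ⟨β₀, hβ₀⟩ := IsAlgClosed.exists_root b (fun h => by simp [h] at hdeg)
    have hf0 : f ≠ 0 := by
      intro h
      exact hno' β₀ hβ₀ (by rw [h, eval_zero])
    -- coprimality
    have hcop : IsCoprime f b := by
      by_contra hnc
      rw [← EuclideanDomain.gcd_isUnit_iff] at hnc
      have hg0 : EuclideanDomain.gcd f b ≠ 0 := fun h =>
        hf0 (EuclideanDomain.gcd_eq_zero_iff.mp h).1
      have hgd : (EuclideanDomain.gcd f b).degree ≠ 0 := fun h =>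
        hnc (isUnit_iff_degree_eq_zero.mpr h)
      obtain ⟨β, hβ⟩ := IsAlgClosed.exists_root _ hgd
      have hβb : b.eval β = 0 :=
        eval_eq_zero_of_dvd_of_eval_eq_zero (EuclideanDomain.gcd_dvd_right f b) hβ
      have hβf : f.eval β = 0 :=
        eval_eq_zero_of_dvd_of_eval_eq_zero (EuclideanDomain.gcd_dvd_left f b) hβ
      exact hno' β hβb hβf
    -- b ∣ p
    have hdvd : b ∣ p * f := ⟨-q, by linear_combination heq⟩
    have hbp : b ∣ p := hcop.symm.dvd_of_dvd_mul_right hdvd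
    have hp0 : p = 0 := by
      apply eq_zero_of_dvd_of_degree_lt hbp
      rwa [degree_eq_natDegree hb0]
    rw [hp0, zero_mul, zero_add] at heq
    have hq0 : q = 0 := by
      rcases mul_eq_zero.mp heq with h | h
      · exact h
      · exact absurd h hb0
    rcases hpq with h | h
    · exact h hp0
    · exact h hq0
  · rintro ⟨β, hβb, hβf⟩
    have hfβ : f.eval β = 0 := by rw [hevalf]; exact hβf
    obtain ⟨g₁, hg₁⟩ := (dvd_iff_isRoot.mpr hβb : (X - Polynomial.C β) ∣ b)
    have hXβ : (X - Polynomial.C β) ≠ 0 := X_sub_C_ne_zero β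
    have hg₁0 : g₁ ≠ 0 := fun h => hb0 (by rw [hg₁, h, mul_zero])
    have hbdeg : b.natDegree = 1 + g₁.natDegree := by
      rw [hg₁, natDegree_mul hXβ hg₁0, natDegree_X_sub_C]
    have hg₁deg : g₁.degree < (b.natDegree : WithBot ℕ) := by
      rw [degree_eq_natDegree hg₁0]
      exact_mod_cast (by omega : g₁.natDegree < b.natDegree)
    rcases eq_or_ne f 0 with hf0 | hf0
    · refine ⟨g₁, 0, Or.inl hg₁0, hg₁deg, ?_, ?_⟩
      · rw [degree_zero]
        exact WithBot.bot_lt_coe _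
      · rw [hf0, mul_zero, zero_mul, add_zero]
    · obtain ⟨f₁, hf₁⟩ := (dvd_iff_isRoot.mpr hfβ : (X - Polynomial.C β) ∣ f)
      have hf₁0 : f₁ ≠ 0 := fun h => hf0 (by rw [hf₁, h, mul_zero])
      have hfdeg : f.natDegree = 1 + f₁.natDegree := by
        rw [hf₁, natDegree_mul hXβ hf₁0, natDegree_X_sub_C]
      have hf₁deg : (-f₁).degree < (f.natDegree : WithBot ℕ) := by
        rw [degree_neg, degree_eq_natDegree hf₁0]
        exact_mod_cast (by omega : f₁.natDegree < f.natDegree)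
      exact ⟨g₁, -f₁, Or.inl hg₁0, hg₁deg, hf₁deg, by rw [hg₁, hf₁]; ring⟩
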